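/- Let ε > 0. Let Q = ⋂_{i=1}^r {y ∈ ℝ^q : (u^i)ᵀy ≥ a_i} be a nonempty polyhedron with recc Q = C whose set V of vertices (extreme points) is nonempty and finite, and suppose P ⊆ Q. Suppose that for every vertex v ∈ V there exist x^v ∈ X and z^v ∈ ℝ^q with ‖z^v‖ ≤ ε and Γ(x^v) ≤_C v + z^v. Then P ⊆ conv{Γ(x^v) : v ∈ V} + C + B_ε, where B_ε = {z ∈ ℝ^q : ‖z‖ ≤ ε}; i.e., the finite set {x^v : v ∈ V} is a finite ε-infimizer of (P). -/

import Mathlib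

open Set Pointwise

noncomputable section

/-- Dot product on `Fin q → ℝ`. -/
def dotp {q : ℕ} (w y : Fin q → ℝ) : ℝ := ∑ i, w i * y i

/-- `N` is a norm on `Fin q → ℝ`. -/
def IsNormFn {q : ℕ} (N : (Fin q → ℝ) → ℝ) : Prop :=
  (∀ z, N z = 0 ↔ z = 0) ∧ (∀ (a : ℝ) (z : Fin q → ℝ), N (a • z) = |a| * N z) ∧
    (∀ z w, N (z + w) ≤ N z + N w)

/-- Recession cone of a set. -/
def recC {q : ℕ} (A : Set (Fin q → ℝ)) : Set (Fin q → ℝ) :=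
  {k | ∀ a ∈ A, ∀ t : ℝ, 0 ≤ t → a + t • k ∈ A}

lemma dotp_add {q : ℕ} (w y z : Fin q → ℝ) : dotp w (y + z) = dotp w y + dotp w z := by
  simp [dotp, mul_add, Finset.sum_add_distrib]

lemma dotp_smul {q : ℕ} (w : Fin q → ℝ) (t : ℝ) (y : Fin q → ℝ) :
    dotp w (t • y) = t * dotp w y := by
  simp only [dotp, Finset.mul_sum, Pi.smul_apply, smul_eq_mul]
  exact Finset.sum_congr rfl (fun i _ => by ring)

lemma dotp_neg {q : ℕ} (w y : Fin q → ℝ) : dotp w (-y) = - dotp w y := by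
  simp only [dotp, Pi.neg_apply, mul_neg, Finset.sum_neg_distrib]

lemma dotp_sub {q : ℕ} (w y z : Fin q → ℝ) : dotp w (y - z) = dotp w y - dotp w z := by
  rw [sub_eq_add_neg, dotp_add, dotp_neg]; ring

open Classical in
/-- active constraint set -/
def act {q r : ℕ} (u : Fin r → (Fin q → ℝ)) (a : Fin r → ℝ) (y : Fin q → ℝ) : Finset (Fin r) :=
  Finset.univ.filter (fun i => dotp (u i) y = a i)

lemma mem_act {q r : ℕ} {u : Fin r → (Fin q → ℝ)} {a : Fin r → ℝ} {y : Fin q → ℝ} {i : Fin r} :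
    i ∈ act u a y ↔ dotp (u i) y = a i := by
  classical
  simp [act]

/-- one-sided step: move along `d` until a new constraint becomes active. -/
lemma step {q r : ℕ} (u : Fin r → (Fin q → ℝ)) (a : Fin r → ℝ)
    (y d : Fin q → ℝ) (hy : ∀ i, a i ≤ dotp (u i) y)
    (hdact : ∀ i, dotp (u i) y = a i → dotp (u i) d = 0)
    (j0 : Fin r) (hj0 : dotp (u j0) d < 0) :
    ∃ t : ℝ, 0 < t ∧ (∀ i, a i ≤ dotp (u i) (y + t • d)) ∧
      (act u a y) ⊂ act u a (y + t • d) := by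
  classical
  set S : Finset (Fin r) := Finset.univ.filter (fun i => dotp (u i) d < 0) with hS
  have hSne : S.Nonempty := ⟨j0, by simp [hS, hj0]⟩
  have hmemS : ∀ i, i ∈ S ↔ dotp (u i) d < 0 := by intro i; simp [hS]
  set f : Fin r → ℝ := fun i => (a i - dotp (u i) y) / (dotp (u i) d) with hf
  have hfpos : ∀ i ∈ S, 0 < f i := by
    intro i hi
    have hid : dotp (u i) d < 0 := (hmemS i).1 hi
    have hlt : a i < dotp (u i) y := by
      rcases lt_or_eq_of_le (hy i) with h | h
      · exact h
      · exact absurd (hdact i h.symm) (ne_of_lt hid)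
    exact div_pos_of_neg_of_neg (by linarith) hid
  set t : ℝ := S.inf' hSne f with ht
  have htpos : 0 < t := (Finset.lt_inf'_iff hSne).2 hfpos
  refine ⟨t, htpos, ?_, ?_⟩
  · intro i
    rw [dotp_add, dotp_smul]
    rcases lt_trichotomy (dotp (u i) d) 0 with hid | hid | hid
    · have hiS : i ∈ S := (hmemS i).2 hid
      have hle : t ≤ f i := Finset.inf'_le f hiS
      have : f i * dotp (u i) d = a i - dotp (u i) y := by
        exact div_mul_cancel₀ _ (ne_of_lt hid)
      nlinarith [hy i]
    · have := hy i; rw [hid]; linarith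
    · nlinarith [hy i, htpos]
  · obtain ⟨j, hjS, hjeq⟩ := Finset.exists_mem_eq_inf' hSne f
    have hjd : dotp (u j) d < 0 := (hmemS j).1 hjS
    constructor
    · intro i hi
      have hia : dotp (u i) y = a i := mem_act.1 hi
      have hid : dotp (u i) d = 0 := hdact i hia
      rw [mem_act, dotp_add, dotp_smul, hid, hia]; ring
    · intro hsub
      have hjnew : j ∈ act u a (y + t • d) := by
        have hD : dotp (u j) d ≠ 0 := ne_of_lt hjd
        rw [mem_act, dotp_add, dotp_smul, ht, hjeq, hf]
        field_simp
        ring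
      have hjold : j ∈ act u a y := hsub hjnew
      exact absurd (hdact j (mem_act.1 hjold)) (ne_of_lt hjd)

/-- non-extreme points admit a direction within the active face. -/
lemma get_dir {q r : ℕ} (u : Fin r → (Fin q → ℝ)) (a : Fin r → ℝ)
    (y : Fin q → ℝ) (hy : ∀ i, a i ≤ dotp (u i) y)
    (hne : y ∉ Set.extremePoints ℝ (⋂ i, {y : Fin q → ℝ | a i ≤ dotp (u i) y})) :
    ∃ d : Fin q → ℝ, d ≠ 0 ∧ ∀ i, dotp (u i) y = a i → dotp (u i) d = 0 := by
  have hyQ : y ∈ ⋂ i, {y : Fin q → ℝ | a i ≤ dotp (u i) y} := by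
    simp only [Set.mem_iInter, Set.mem_setOf_eq]; exact hy
  rw [mem_extremePoints] at hne
  push_neg at hne
  obtain ⟨x₁, hx₁, x₂, hx₂, hseg, hneq⟩ := hne hyQ
  obtain ⟨s, b, hs, hb, hsb, hcomb⟩ := hseg
  simp only [Set.mem_iInter, Set.mem_setOf_eq] at hx₁ hx₂
  have hx12 : x₁ ≠ x₂ := by
    intro h
    subst h
    have : x₁ = y := by
      have : (s + b) • x₁ = y := by rw [add_smul]; exact hcomb
      rwa [hsb, one_smul] at this
    exact hneq this this
  refine ⟨x₂ - x₁, ?_, ?_⟩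
  · intro h
    rw [sub_eq_zero] at h
    exact hx12 h.symm
  intro i hia
  have h1 : s * dotp (u i) x₁ + b * dotp (u i) x₂ = a i := by
    have := congrArg (dotp (u i)) hcomb
    rwa [dotp_add, dotp_smul, dotp_smul, hia] at this
  have key : s * a i + b * a i = a i := by rw [← add_mul, hsb, one_mul]
  have e1 : dotp (u i) x₁ = a i := by
    by_contra hne1
    have h1' : a i < dotp (u i) x₁ := lt_of_le_of_ne (hx₁ i) (Ne.symm hne1)
    have := mul_lt_mul_of_pos_left h1' hs
    have := mul_le_mul_of_nonneg_left (hx₂ i) hb.le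
    linarith
  have e2 : dotp (u i) x₂ = a i := by
    by_contra hne2
    have h2' : a i < dotp (u i) x₂ := lt_of_le_of_ne (hx₂ i) (Ne.symm hne2)
    have := mul_lt_mul_of_pos_left h2' hb
    have := mul_le_mul_of_nonneg_left (hx₁ i) hs.le
    linarith
  rw [dotp_sub, e1, e2]; ring

/-- Decomposition: every point of a line-free polyhedron lies in
`convexHull (extremePoints) + C`. -/
lemma decomp {q r : ℕ} (u : Fin r → (Fin q → ℝ)) (a : Fin r → ℝ)
    (C : Set (Fin q → ℝ)) (hCconv : Convex ℝ C)
    (hCcone : ∀ t : ℝ, 0 ≤ t → ∀ y ∈ C, t • y ∈ C)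
    (hCmem : ∀ d, (∀ i, 0 ≤ dotp (u i) d) → d ∈ C)
    (hCzero : ∀ d : Fin q → ℝ, (∀ i, dotp (u i) d = 0) → d = 0) :
    ∀ k : ℕ, ∀ y, (∀ i, a i ≤ dotp (u i) y) →
      r - (act u a y).card ≤ k →
      y ∈ convexHull ℝ (Set.extremePoints ℝ (⋂ i, {y : Fin q → ℝ | a i ≤ dotp (u i) y})) + C := by
  classical
  set Q : Set (Fin q → ℝ) := ⋂ i, {y : Fin q → ℝ | a i ≤ dotp (u i) y} with hQdef
  have hC0 : (0 : Fin q → ℝ) ∈ C := hCmem 0 (by intro i; simp [dotp])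
  have hext : ∀ y, (∀ i, a i ≤ dotp (u i) y) → y ∈ Set.extremePoints ℝ Q →
      y ∈ convexHull ℝ (Set.extremePoints ℝ Q) + C := by
    intro y _ hy
    have : y = y + 0 := by simp
    rw [this]
    exact Set.add_mem_add (subset_convexHull ℝ _ hy) hC0
  have hCadd : ∀ c₁ ∈ C, ∀ c₂ ∈ C, c₁ + c₂ ∈ C := by
    intro c₁ h₁ c₂ h₂
    have hmid : (1/2 : ℝ) • c₁ + (1/2 : ℝ) • c₂ ∈ C :=
      hCconv h₁ h₂ (by norm_num) (by norm_num) (by norm_num)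
    have := hCcone 2 (by norm_num) _ hmid
    have heq : (2:ℝ) • ((1/2 : ℝ) • c₁ + (1/2 : ℝ) • c₂) = c₁ + c₂ := by
      rw [smul_add, smul_smul, smul_smul]; norm_num
    rwa [heq] at this
  intro k
  induction k with
  | zero =>
    intro y hy hcard
    by_contra hcon
    have hyne : y ∉ Set.extremePoints ℝ Q := fun h => hcon (hext y hy h)
    obtain ⟨d, hd0, hdact⟩ := get_dir u a y hy hyne
    have hall : act u a y = Finset.univ := by
      have h1 : (act u a y).card ≤ r := by
        simpa using Finset.card_le_card (Finset.subset_univ (act u a y))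
      have h2 : r ≤ (act u a y).card := by omega
      apply Finset.eq_univ_of_card
      simp [le_antisymm h1 h2]
    have : ∀ i, dotp (u i) d = 0 := by
      intro i
      exact hdact i (mem_act.1 (hall ▸ Finset.mem_univ i))
    exact hd0 (hCzero d this)
  | succ k ih =>
    intro y hy hcard
    by_cases hyext : y ∈ Set.extremePoints ℝ Q
    · exact hext y hy hyext
    obtain ⟨d, hd0, hdact⟩ := get_dir u a y hy hyext
    have hcard' : ∀ y' : Fin q → ℝ, act u a y ⊂ act u a y' → r - (act u a y').card ≤ k := by
      intro y' hss
      have := Finset.card_lt_card hss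
      omega
    by_cases hneg : ∃ i, dotp (u i) d < 0
    · obtain ⟨j0, hj0⟩ := hneg
      obtain ⟨t₂, ht₂, hy₂, hss₂⟩ := step u a y d hy hdact j0 hj0
      by_cases hpos : ∃ i, dotp (u i) (-d) < 0
      · -- both directions blocked: convex combination
        obtain ⟨j1, hj1⟩ := hpos
        have hdact' : ∀ i, dotp (u i) y = a i → dotp (u i) (-d) = 0 := by
          intro i hi; rw [dotp_neg, hdact i hi]; ring
        obtain ⟨t₁, ht₁, hy₁, hss₁⟩ := step u a y (-d) hy hdact' j1 hj1
        have m₂ := ih (y + t₂ • d) hy₂ (hcard' _ hss₂)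
        have m₁ := ih (y + t₁ • (-d)) hy₁ (hcard' _ hss₁)
        have hconvR : Convex ℝ (convexHull ℝ (Set.extremePoints ℝ Q) + C) :=
          (convex_convexHull ℝ _).add hCconv
        have hsum : t₁ + t₂ ≠ 0 := ne_of_gt (by linarith)
        have hcomb : (t₁ / (t₁ + t₂)) • (y + t₂ • d) + (t₂ / (t₁ + t₂)) • (y + t₁ • (-d)) = y := by
          funext i
          simp only [Pi.add_apply, Pi.smul_apply, smul_eq_mul, Pi.neg_apply]
          field_simp
          ring
        have hsum1 : t₁ / (t₁ + t₂) + t₂ / (t₁ + t₂) = 1 := by field_simp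
        have := hconvR m₂ m₁ (div_nonneg ht₁.le (by linarith)) (div_nonneg ht₂.le (by linarith)) hsum1
        rwa [hcomb] at this
      · -- -d is a recession direction
        push_neg at hpos
        have hdC : (-d) ∈ C := by
          apply hCmem
          intro i
          exact hpos i
        obtain ⟨w, hw, c, hc, hwc⟩ := Set.mem_add.1 (ih (y + t₂ • d) hy₂ (hcard' _ hss₂))
        have : y = w + (c + t₂ • (-d)) := by
          have : y = (y + t₂ • d) + t₂ • (-d) := by
            funext i; simp only [Pi.add_apply, Pi.smul_apply, Pi.neg_apply, smul_eq_mul]; ring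
          rw [this, ← hwc]; abel
        rw [this]
        exact Set.add_mem_add hw (hCadd c hc _ (hCcone t₂ (le_of_lt ht₂) _ hdC))
    · push_neg at hneg
      by_cases hpos : ∃ i, dotp (u i) (-d) < 0
      · -- d is a recession direction, move along -d
        obtain ⟨j1, hj1⟩ := hpos
        have hdact' : ∀ i, dotp (u i) y = a i → dotp (u i) (-d) = 0 := by
          intro i hi; rw [dotp_neg, hdact i hi]; ring
        obtain ⟨t₁, ht₁, hy₁, hss₁⟩ := step u a y (-d) hy hdact' j1 hj1
        have hdC : d ∈ C := hCmem d hneg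
        obtain ⟨w, hw, c, hc, hwc⟩ := Set.mem_add.1 (ih (y + t₁ • (-d)) hy₁ (hcard' _ hss₁))
        have : y = w + (c + t₁ • d) := by
          have : y = (y + t₁ • (-d)) + t₁ • d := by
            funext i; simp only [Pi.add_apply, Pi.smul_apply, Pi.neg_apply, smul_eq_mul]; ring
          rw [this, ← hwc]; abel
        rw [this]
        exact Set.add_mem_add hw (hCadd c hc _ (hCcone t₁ (le_of_lt ht₁) _ hdC))
      · push_neg at hpos
        have : ∀ i, dotp (u i) d = 0 := by
          intro i
          have h1 := hneg i
          have h2 := hpos i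
          rw [dotp_neg] at h2
          linarith
        exact absurd (hCzero d this) hd0

/-- if `Q ⊇ P` is a polyhedron with `recc Q = C` and every vertex `v`
of `Q` admits `x^v ∈ X`, `z^v` with `‖z^v‖ ≤ ε` and `Γ(x^v) ≤_C v + z^v`, then
`P ⊆ conv {Γ(x^v) : v ∈ V} + C + B_ε`. -/
theorem stmt13 {q n r : ℕ}
    (N : (Fin q → ℝ) → ℝ) (hN : IsNormFn N)
    (C : Set (Fin q → ℝ))
    (hCclosed : IsClosed C) (hCconv : Convex ℝ C)
    (hCcone : ∀ t : ℝ, 0 ≤ t → ∀ y ∈ C, t • y ∈ C)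
    (hCsolid : (interior C).Nonempty)
    (hCpointed : ∀ y ∈ C, -y ∈ C → y = 0)
    (hCnontriv : {(0 : Fin q → ℝ)} ⊂ C ∧ C ⊂ Set.univ)
    (X : Set (Fin n → ℝ)) (hX : IsCompact X) (hXconv : Convex ℝ X)
    (hXint : (interior X).Nonempty)
    (Γ : (Fin n → ℝ) → (Fin q → ℝ)) (hΓ : ContinuousOn Γ X)
    (hΓconv : ∀ x₁ ∈ X, ∀ x₂ ∈ X, ∀ t : ℝ, t ∈ Icc (0:ℝ) 1 →
      t • Γ x₁ + (1 - t) • Γ x₂ - Γ (t • x₁ + (1 - t) • x₂) ∈ C)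
    (ε : ℝ) (hε : 0 < ε)
    (u : Fin r → (Fin q → ℝ)) (hu : ∀ i, u i ≠ 0) (a : Fin r → ℝ)
    (Q : Set (Fin q → ℝ)) (hQ : Q = ⋂ i, {y | a i ≤ dotp (u i) y})
    (hQne : Q.Nonempty) (hQrec : recC Q = C)
    (V : Set (Fin q → ℝ)) (hV : V = Set.extremePoints ℝ Q)
    (hVne : V.Nonempty) (hVfin : V.Finite)
    (hPQ : Γ '' X + C ⊆ Q)
    (xv : (Fin q → ℝ) → (Fin n → ℝ)) (zv : (Fin q → ℝ) → (Fin q → ℝ))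
    (hvert : ∀ v ∈ V, xv v ∈ X ∧ N (zv v) ≤ ε ∧ v + zv v - Γ (xv v) ∈ C) :
    Γ '' X + C ⊆ convexHull ℝ ((fun v => Γ (xv v)) '' V) + C + {z | N z ≤ ε} := by
  obtain ⟨hN0, hNsmul, hNtri⟩ := hN
  have hmemQ : ∀ y, y ∈ Q ↔ ∀ i, a i ≤ dotp (u i) y := by
    intro y
    rw [hQ]
    simp [Set.mem_iInter]
  -- every direction with nonnegative dot products is in C
  have hrec : ∀ d : Fin q → ℝ, (∀ i, 0 ≤ dotp (u i) d) → d ∈ C := by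
    intro d hd
    rw [← hQrec]
    intro p hp t ht
    rw [hmemQ] at hp ⊢
    intro i
    have h1 := hp i
    have h2 := hd i
    rw [dotp_add, dotp_smul]
    nlinarith
  have hCzero : ∀ d : Fin q → ℝ, (∀ i, dotp (u i) d = 0) → d = 0 := by
    intro d hd
    have h1 : d ∈ C := hrec d (fun i => (hd i).ge)
    have h2 : -d ∈ C := hrec (-d) (fun i => by rw [dotp_neg, hd i]; norm_num)
    exact hCpointed d h1 h2
  have hCadd : ∀ c₁ ∈ C, ∀ c₂ ∈ C, c₁ + c₂ ∈ C := by
    intro c₁ h₁ c₂ h₂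
    have hmid : (1/2 : ℝ) • c₁ + (1/2 : ℝ) • c₂ ∈ C :=
      hCconv h₁ h₂ (by norm_num) (by norm_num) (by norm_num)
    have := hCcone 2 (by norm_num) _ hmid
    have heq : (2:ℝ) • ((1/2 : ℝ) • c₁ + (1/2 : ℝ) • c₂) = c₁ + c₂ := by
      rw [smul_add, smul_smul, smul_smul]; norm_num
    rwa [heq] at this
  have hNneg : ∀ z, N (-z) = N z := by
    intro z
    have := hNsmul (-1) z
    rw [neg_one_smul] at this
    simpa using this
  have hNnonneg : ∀ z, 0 ≤ N z := by
    intro z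
    have h0 : N (0 : Fin q → ℝ) = 0 := (hN0 0).2 rfl
    have h2 : N (0 : Fin q → ℝ) ≤ N z + N (-z) := by
      have := hNtri z (-z)
      rwa [show z + -z = (0 : Fin q → ℝ) by abel] at this
    rw [h0, hNneg] at h2
    linarith
  set B : Set (Fin q → ℝ) := {z | N z ≤ ε} with hB
  have hBconv : Convex ℝ B := by
    intro z hz w hw s t hs ht hst
    simp only [hB, Set.mem_setOf_eq] at hz hw ⊢
    calc N (s • z + t • w) ≤ N (s • z) + N (t • w) := hNtri _ _
      _ = |s| * N z + |t| * N w := by rw [hNsmul, hNsmul]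
      _ = s * N z + t * N w := by rw [abs_of_nonneg hs, abs_of_nonneg ht]
      _ ≤ s * ε + t * ε := by
          have := mul_le_mul_of_nonneg_left hz hs
          have := mul_le_mul_of_nonneg_left hw ht
          linarith
      _ = ε := by rw [← add_mul, hst, one_mul]
  have claim : convexHull ℝ V ⊆ (convexHull ℝ ((fun v => Γ (xv v)) '' V) + C) + B := by
    apply convexHull_min
    · intro v hv
      obtain ⟨hxvX, hNz, hCz⟩ := hvert v hv
      have hveq : v = (Γ (xv v) + (v + zv v - Γ (xv v))) + (-(zv v)) := by abel
      rw [hveq]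
      refine Set.add_mem_add (Set.add_mem_add ?_ hCz) ?_
      · exact subset_convexHull ℝ _ ⟨v, hv, rfl⟩
      · simp only [hB, Set.mem_setOf_eq, hNneg]
        exact hNz
    · exact ((convex_convexHull ℝ _).add hCconv).add hBconv
  intro p hp
  have hpQ : p ∈ Q := hPQ hp
  have hpi : ∀ i, a i ≤ dotp (u i) p := (hmemQ p).1 hpQ
  have hdec := decomp u a C hCconv hCcone hrec hCzero r p hpi (by omega)
  rw [← hQ, ← hV] at hdec
  obtain ⟨w, hw, c, hc, hwc⟩ := Set.mem_add.1 hdec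
  obtain ⟨gc, hgc, b, hb, hw2⟩ := Set.mem_add.1 (claim hw)
  obtain ⟨g, hg, c', hc', hgc2⟩ := Set.mem_add.1 hgc
  have hpeq : p = (g + (c' + c)) + b := by
    rw [← hwc, ← hw2, ← hgc2]; abel
  rw [hpeq]
  exact Set.add_mem_add (Set.add_mem_add hg (hCadd c' hc' c hc)) hb
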